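/- If k ≥ (1+ε)·log_σ n and λ = λ(n) = o(n^ε), then for a uniformly random σ-ary string s of length n, E[λ·n·H_k(s)] = o(n·log σ); in particular E[λ·n·H_k(s) + o(n log σ)] = o(n log σ), which is asymptotically smaller than the Θ(n log σ) expected bits needed to store s. -/

import Mathlib

open scoped Classical
open Finset Real Filter

noncomputable section

/-- Zeroth-order empirical entropy of a multiset of characters (base-2 bits per character). -/
def H0M {A : Type*} [Fintype A] (t : Multiset A) : ℝ :=
  (1 / (Multiset.card t : ℝ)) *
    ∑ a : A, (t.count a : ℝ) * Real.logb 2 ((Multiset.card t : ℝ) / (t.count a : ℝ))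

/-- Zeroth-order empirical entropy of a string `s` of length `n`. -/
def H0F {A : Type*} [Fintype A] {n : ℕ} (s : Fin n → A) : ℝ :=
  H0M (Multiset.map s Finset.univ.val)

/-- The context string `s_α`: the multiset of characters immediately following
occurrences of the `k`-tuple `α` in `s`. -/
def ctxF {A : Type*} [Fintype A] {n : ℕ} (k : ℕ) (s : Fin n → A) (α : Fin k → A) : Multiset A :=
  Multiset.map (fun i : Fin n => s ⟨min ((i : ℕ) + k) (n - 1), by have := i.isLt; omega⟩)
    ((Finset.univ.filter (fun i : Fin n =>
      (i : ℕ) + k < n ∧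
        ∀ t : Fin k, s ⟨min ((i : ℕ) + (t : ℕ)) (n - 1), by have := i.isLt; omega⟩ = α t)).val)

/-- `k`-th order empirical entropy of a string `s` of length `n`. -/
def HkF {A : Type*} [Fintype A] {n : ℕ} (k : ℕ) (s : Fin n → A) : ℝ :=
  (1 / (n : ℝ)) * ∑ α : Fin k → A, (Multiset.card (ctxF k s α) : ℝ) * H0M (ctxF k s α)

/-- The `k`-tuples of `s` starting at positions `i` and `j` both fit in `s` and coincide. -/
def MatchAt {A : Type*} {n : ℕ} (s : Fin n → A) (k i j : ℕ) : Prop :=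
  i + k ≤ n ∧ j + k ≤ n ∧
    ∀ t, t < k → ∀ (hi : i + t < n) (hj : j + t < n), s ⟨i + t, hi⟩ = s ⟨j + t, hj⟩

/-- `s` contains two matching `k`-tuples. -/
def HasMatch {A : Type*} {n : ℕ} (k : ℕ) (s : Fin n → A) : Prop :=
  ∃ i j : ℕ, i < j ∧ MatchAt s k i j

lemma H0M_nonneg {A : Type*} [Fintype A] (t : Multiset A) : 0 ≤ H0M t := by
  unfold H0M
  apply mul_nonneg (by positivity)
  apply Finset.sum_nonneg; intro a _
  rcases Nat.eq_zero_or_pos (t.count a) with h | h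
  · simp [h]
  · apply mul_nonneg (by positivity)
    apply Real.logb_nonneg one_lt_two
    rw [le_div_iff₀ (by exact_mod_cast h), one_mul]
    exact_mod_cast Multiset.count_le_card a t

lemma H0M_le {A : Type*} [Fintype A] (t : Multiset A) :
    H0M t ≤ (Fintype.card A : ℝ) / Real.log 2 := by
  have hl2 : (0:ℝ) < Real.log 2 := Real.log_pos one_lt_two
  rcases Nat.eq_zero_or_pos (Multiset.card t) with hc | hc
  · rw [Multiset.card_eq_zero] at hc
    subst hc
    simp [H0M]
    positivity
  · have hc0 : (0:ℝ) < (Multiset.card t : ℝ) := by exact_mod_cast hc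
    unfold H0M
    have hterm : ∀ a : A, (t.count a : ℝ) * Real.logb 2 ((Multiset.card t : ℝ) / (t.count a : ℝ))
        ≤ (Multiset.card t : ℝ) / Real.log 2 := by
      intro a
      rcases Nat.eq_zero_or_pos (t.count a) with h | h
      · simp [h]; positivity
      · have h0 : (0:ℝ) < (t.count a : ℝ) := by exact_mod_cast h
        have hx : (0:ℝ) < (Multiset.card t : ℝ) / (t.count a : ℝ) := by positivity
        have hlog : Real.log ((Multiset.card t : ℝ) / (t.count a : ℝ))
            ≤ (Multiset.card t : ℝ) / (t.count a : ℝ) :=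
          le_trans (Real.log_le_sub_one_of_pos hx) (by linarith)
        rw [Real.logb, div_eq_mul_inv (Real.log _)]
        calc (t.count a : ℝ) * (Real.log ((Multiset.card t:ℝ)/(t.count a:ℝ)) * (Real.log 2)⁻¹)
            ≤ (t.count a : ℝ) * (((Multiset.card t:ℝ)/(t.count a:ℝ)) * (Real.log 2)⁻¹) := by
              apply mul_le_mul_of_nonneg_left _ (le_of_lt h0)
              exact mul_le_mul_of_nonneg_right hlog (by positivity)
          _ = (Multiset.card t : ℝ) / Real.log 2 := by
              field_simp
    calc (1 / (Multiset.card t : ℝ)) * ∑ a : A, (t.count a : ℝ) * Real.logb 2 ((Multiset.card t : ℝ) / (t.count a : ℝ))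
        ≤ (1 / (Multiset.card t : ℝ)) * ∑ a : A, ((Multiset.card t : ℝ) / Real.log 2) := by
          apply mul_le_mul_of_nonneg_left (Finset.sum_le_sum fun a _ => hterm a) (by positivity)
      _ = (Fintype.card A : ℝ) / Real.log 2 := by
          rw [Finset.sum_const, Finset.card_univ, nsmul_eq_mul]
          field_simp

lemma H0M_zero {A : Type*} [Fintype A] {t : Multiset A} (h : Multiset.card t ≤ 1) :
    H0M t = 0 := by
  unfold H0M
  have : ∀ a : A, (t.count a : ℝ) * Real.logb 2 ((Multiset.card t : ℝ) / (t.count a : ℝ)) = 0 := by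
    intro a
    have hle := Multiset.count_le_card a t
    rcases Nat.eq_zero_or_pos (t.count a) with h' | h'
    · simp [h']
    · have h1 : t.count a = 1 := by omega
      have h2 : Multiset.card t = 1 := by omega
      simp [h1, h2]
  rw [Finset.sum_congr rfl fun a _ => this a]
  simp

def tupleAt {A : Type*} {n : ℕ} (k : ℕ) (s : Fin n → A) (i : Fin n) : Fin k → A :=
  fun t => s ⟨min ((i : ℕ) + (t : ℕ)) (n - 1), by have := i.isLt; omega⟩

lemma tupleAt_apply {A : Type*} {n k : ℕ} (s : Fin n → A) (i : Fin n)
    (hik : (i : ℕ) + k ≤ n) (t : Fin k) (h : (i : ℕ) + (t : ℕ) < n) :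
    tupleAt k s i t = s ⟨(i : ℕ) + (t : ℕ), h⟩ := by
  unfold tupleAt
  congr 1
  have := t.isLt
  simp only [Fin.mk.injEq]
  omega

def Fset {A : Type*} [Fintype A] {n : ℕ} (k : ℕ) (s : Fin n → A) (α : Fin k → A) :
    Finset (Fin n) :=
  Finset.univ.filter (fun i => (i : ℕ) + k < n ∧ tupleAt k s i = α)

lemma card_ctx {A : Type*} [Fintype A] {n : ℕ} (k : ℕ) (s : Fin n → A) (α : Fin k → A) :
    Multiset.card (ctxF k s α) = (Fset k s α).card := by
  unfold ctxF Fset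
  rw [Multiset.card_map]
  show (Finset.univ.filter _).card = (Finset.univ.filter _).card
  congr 1
  apply Finset.filter_congr
  intro i _
  constructor
  · rintro ⟨h1, h2⟩
    exact ⟨h1, funext fun t => h2 t⟩
  · rintro ⟨h1, h2⟩
    exact ⟨h1, fun t => congrFun h2 t⟩

def Qset {A : Type*} [Fintype A] {n : ℕ} (k : ℕ) (s : Fin n → A) : Finset (Fin n × Fin n) :=
  Finset.univ.filter (fun p => p.1 ≠ p.2 ∧ (p.1 : ℕ) + k < n ∧ (p.2 : ℕ) + k < n ∧
    tupleAt k s p.1 = tupleAt k s p.2)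

lemma Qcard {A : Type*} [Fintype A] {n : ℕ} (k : ℕ) (s : Fin n → A) :
    (Qset k s).card = ∑ α : Fin k → A,
      ((Fset k s α).card * (Fset k s α).card - (Fset k s α).card) := by
  rw [Finset.card_eq_sum_card_fiberwise
    (f := fun p : Fin n × Fin n => tupleAt k s p.1) (t := Finset.univ)
    (fun _ _ => Finset.mem_univ _)]
  refine Finset.sum_congr rfl fun α _ => ?_
  rw [← Finset.offDiag_card]
  congr 1
  ext p
  simp only [Finset.mem_filter, Finset.mem_offDiag, Qset, Fset, Finset.mem_univ, true_and]
  constructor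
  · rintro ⟨⟨hne, h1, h2, heq⟩, hα⟩
    exact ⟨⟨h1, hα⟩, ⟨h2, heq ▸ hα⟩, hne⟩
  · rintro ⟨⟨h1, hα1⟩, ⟨h2, hα2⟩, hne⟩
    exact ⟨⟨hne, h1, h2, hα1.trans hα2.symm⟩, hα1⟩

def pasteG {A : Type*} {n : ℕ} (j k : ℕ) (hjk : j + k ≤ n)
    (sg : (Fin n → A) × (Fin k → A)) : Fin n → A :=
  fun p => if h : j ≤ (p : ℕ) ∧ (p : ℕ) < j + k then sg.2 ⟨(p : ℕ) - j, by omega⟩ else sg.1 p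

lemma count_match {A : Type*} [Fintype A] {n k : ℕ} (i j : Fin n)
    (hij : (i : ℕ) < (j : ℕ)) (hjk : (j : ℕ) + k < n) :
    (Finset.univ.filter (fun s : Fin n → A => tupleAt k s i = tupleAt k s j)).card
      * Fintype.card A ^ k ≤ Fintype.card A ^ n := by
  have hjk' : (j : ℕ) + k ≤ n := le_of_lt hjk
  have hik : (i : ℕ) + k ≤ n := by omega
  set P := fun s : Fin n → A => tupleAt k s i = tupleAt k s j with hP
  have hinj : Set.InjOn (pasteG (j : ℕ) k hjk')
      (((Finset.univ.filter P) ×ˢ (Finset.univ : Finset (Fin k → A)) :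
        Finset ((Fin n → A) × (Fin k → A))) : Set ((Fin n → A) × (Fin k → A))) := by
    rintro ⟨s, g⟩ h1 ⟨s', g'⟩ h2 heq
    simp only [Finset.coe_product, Set.mem_prod, Finset.mem_coe, Finset.mem_filter,
      Finset.mem_univ, true_and, and_true] at h1 h2
    have hs : ∀ m (hm : m < n), s ⟨m, hm⟩ = s' ⟨m, hm⟩ := by
      intro m
      induction m using Nat.strong_induction_on with
      | _ m IH =>
        intro hm
        by_cases hc : (j : ℕ) ≤ m ∧ m < (j : ℕ) + k
        · have ht : m - (j : ℕ) < k := by omega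
          have hi' : (i : ℕ) + (m - (j : ℕ)) < n := by omega
          have hj' : (j : ℕ) + (m - (j : ℕ)) < n := by omega
          have e1 : s ⟨(i : ℕ) + (m - (j : ℕ)), hi'⟩ = s ⟨m, hm⟩ := by
            have a1 := tupleAt_apply s i hik ⟨m - (j : ℕ), ht⟩ hi'
            have a2 := tupleAt_apply s j hjk' ⟨m - (j : ℕ), ht⟩ hj'
            have := congrFun h1 ⟨m - (j : ℕ), ht⟩
            rw [a1, a2] at this
            rw [this]
            congr 1
            simp only [Fin.mk.injEq]
            omega
          have e2 : s' ⟨(i : ℕ) + (m - (j : ℕ)), hi'⟩ = s' ⟨m, hm⟩ := by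
            have a1 := tupleAt_apply s' i hik ⟨m - (j : ℕ), ht⟩ hi'
            have a2 := tupleAt_apply s' j hjk' ⟨m - (j : ℕ), ht⟩ hj'
            have := congrFun h2 ⟨m - (j : ℕ), ht⟩
            rw [a1, a2] at this
            rw [this]
            congr 1
            simp only [Fin.mk.injEq]
            omega
          rw [← e1, ← e2]
          exact IH _ (by omega) hi'
        · have := congrFun heq ⟨m, hm⟩
          simpa only [pasteG, dif_neg hc] using this
    have hg : g = g' := by
      funext t
      have htlt : (j : ℕ) + (t : ℕ) < n := by have := t.isLt; omega
      have := congrFun heq ⟨(j : ℕ) + (t : ℕ), htlt⟩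
      have hcond : (j : ℕ) ≤ (j : ℕ) + (t : ℕ) ∧ (j : ℕ) + (t : ℕ) < (j : ℕ) + k :=
        ⟨by omega, by have := t.isLt; omega⟩
      simp only [pasteG, dif_pos hcond] at this
      have e : (⟨(j : ℕ) + (t : ℕ) - (j : ℕ), by omega⟩ : Fin k) = t := by
        apply Fin.ext
        simp only [Fin.val_mk]
        omega
      rwa [e] at this
    have hss : s = s' := funext fun p => by
      have := hs p.val p.isLt
      simpa using this
    simp only [Prod.mk.injEq]
    exact ⟨hss, hg⟩
  have key := Finset.card_le_card_of_injOn (pasteG (j : ℕ) k hjk')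
    (fun _ _ => Finset.mem_univ _) hinj
  rw [Finset.card_product, Finset.card_univ, Finset.card_univ] at key
  simpa [Fintype.card_fun] using key

lemma HkF_nonneg {A : Type*} [Fintype A] {n : ℕ} (k : ℕ) (s : Fin n → A) : 0 ≤ HkF k s :=
  mul_nonneg (by positivity)
    (Finset.sum_nonneg fun α _ => mul_nonneg (Nat.cast_nonneg _) (H0M_nonneg _))

lemma nHkF_le {A : Type*} [Fintype A] {n k : ℕ} (s : Fin n → A) :
    (n : ℝ) * HkF k s ≤ ((Fintype.card A : ℝ) / Real.log 2) * ((Qset k s).card : ℝ) := by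
  have hl2 : (0:ℝ) < Real.log 2 := Real.log_pos one_lt_two
  rcases Nat.eq_zero_or_pos n with hn | hn
  · subst hn
    simp only [Nat.cast_zero, zero_mul]
    positivity
  · have hne : (n : ℝ) ≠ 0 := by positivity
    unfold HkF
    rw [Qcard, Nat.cast_sum]
    have hcancel : (n : ℝ) * ((1 / (n : ℝ)) *
        ∑ α : Fin k → A, (Multiset.card (ctxF k s α) : ℝ) * H0M (ctxF k s α)) =
        ∑ α : Fin k → A, (Multiset.card (ctxF k s α) : ℝ) * H0M (ctxF k s α) := by
      field_simp
    rw [hcancel, Finset.mul_sum]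
    apply Finset.sum_le_sum
    intro α _
    rw [card_ctx]
    set m := (Fset k s α).card with hm
    by_cases h : m ≤ 1
    · rw [H0M_zero (by rw [card_ctx]; exact h), mul_zero]
      positivity
    · push_neg at h
      have h2 : m ≤ m * m - m := by nlinarith [Nat.sub_add_cancel (Nat.le_mul_of_pos_left m (by omega : 0 < m))]
      calc (m : ℝ) * H0M (ctxF k s α)
          ≤ (m : ℝ) * ((Fintype.card A : ℝ) / Real.log 2) :=
            mul_le_mul_of_nonneg_left (H0M_le _) (Nat.cast_nonneg m)
        _ ≤ ((Fintype.card A : ℝ) / Real.log 2) * ((m * m - m : ℕ) : ℝ) := by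
            rw [mul_comm]
            exact mul_le_mul_of_nonneg_left (by exact_mod_cast h2) (by positivity)

lemma sumQ {A : Type*} [Fintype A] {n k : ℕ} (hA : 0 < Fintype.card A) :
    ∑ s : Fin n → A, ((Qset k s).card : ℝ) ≤
      ((n : ℝ) * n) * ((Fintype.card A : ℝ) ^ n / (Fintype.card A : ℝ) ^ k) := by
  have hA' : (0:ℝ) < (Fintype.card A : ℝ) := by exact_mod_cast hA
  have step1 : ∀ s : Fin n → A, ((Qset k s).card : ℝ) =
      ∑ p : Fin n × Fin n, (if p ∈ Qset k s then (1:ℝ) else 0) := by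
    intro s
    simp [Finset.sum_ite_mem]
  rw [Finset.sum_congr rfl (fun s _ => step1 s), Finset.sum_comm]
  have inner : ∀ p : Fin n × Fin n,
      (∑ s : Fin n → A, if p ∈ Qset k s then (1:ℝ) else 0)
        ≤ (Fintype.card A : ℝ) ^ n / (Fintype.card A : ℝ) ^ k := by
    intro p
    rw [Finset.sum_boole]
    rw [le_div_iff₀ (by positivity)]
    by_cases hp : p.1 ≠ p.2 ∧ (p.1 : ℕ) + k < n ∧ (p.2 : ℕ) + k < n
    · have hfe : Finset.univ.filter (fun s : Fin n → A => p ∈ Qset k s) =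
          Finset.univ.filter (fun s : Fin n → A => tupleAt k s p.1 = tupleAt k s p.2) := by
        apply Finset.filter_congr
        intro s _
        simp only [Qset, Finset.mem_filter, Finset.mem_univ, true_and]
        constructor
        · rintro ⟨_, _, _, h⟩; exact h
        · intro h; exact ⟨hp.1, hp.2.1, hp.2.2, h⟩
      rw [hfe]
      have hne : (p.1 : ℕ) ≠ (p.2 : ℕ) := fun h => hp.1 (Fin.ext h)
      rcases lt_or_gt_of_ne hne with h | h
      · exact_mod_cast count_match p.1 p.2 h hp.2.2
      · have hswap : Finset.univ.filter (fun s : Fin n → A => tupleAt k s p.1 = tupleAt k s p.2) =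
            Finset.univ.filter (fun s : Fin n → A => tupleAt k s p.2 = tupleAt k s p.1) := by
          apply Finset.filter_congr
          intro s _
          exact eq_comm
        rw [hswap]
        exact_mod_cast count_match p.2 p.1 h hp.2.1
    · have hempty : Finset.univ.filter (fun s : Fin n → A => p ∈ Qset k s) = ∅ := by
        apply Finset.filter_eq_empty_iff.mpr
        intro s _
        simp only [Qset, Finset.mem_filter, Finset.mem_univ, true_and]
        tauto
      rw [hempty]
      simp
  calc ∑ p : Fin n × Fin n, (∑ s : Fin n → A, if p ∈ Qset k s then (1:ℝ) else 0)
      ≤ ∑ _p : Fin n × Fin n, (Fintype.card A : ℝ) ^ n / (Fintype.card A : ℝ) ^ k :=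
        Finset.sum_le_sum fun p _ => inner p
    _ = ((n : ℝ) * n) * ((Fintype.card A : ℝ) ^ n / (Fintype.card A : ℝ) ^ k) := by
        simp [Finset.sum_const, Finset.card_univ]

/-- If `k(n) ≥ (1+ε)·log_σ n` and `λ(n) = o(n^ε)`, then for uniformly random
σ-ary strings of length `n`, `E[λ(n)·n·H_{k(n)}(s)] = o(n·log σ)`. -/
theorem expected_lambda_n_Hk_littleO {A : Type*} [Fintype A] {σ : ℕ}
    (hσ : Fintype.card A = σ) (hσ2 : 2 ≤ σ) {ε : ℝ} (hε : 0 < ε)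
    (k : ℕ → ℕ) (lam : ℕ → ℝ)
    (hk : ∀ n : ℕ, (1 + ε) * Real.logb σ n ≤ (k n : ℝ))
    (hlam : lam =o[Filter.atTop] fun n : ℕ => (n : ℝ) ^ ε) :
    (fun n : ℕ => (1 / (Fintype.card (Fin n → A) : ℝ)) *
        ∑ s : Fin n → A, lam n * (n : ℝ) * HkF (k n) s)
      =o[Filter.atTop] fun n : ℕ => (n : ℝ) * Real.logb 2 σ := by
  subst hσ
  have hA : 0 < Fintype.card A := by omega
  have hA1 : (1:ℝ) < (Fintype.card A : ℝ) := by
    exact_mod_cast (by omega : 1 < Fintype.card A)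
  set a : ℝ := (Fintype.card A : ℝ) with ha
  have ha0 : (0:ℝ) < a := by positivity
  have hl2 : (0:ℝ) < Real.log 2 := Real.log_pos one_lt_two
  set C : ℝ := a / Real.log 2 with hC
  have hC0 : (0:ℝ) ≤ C := by positivity
  set E : ℕ → ℝ :=
    fun n => (1 / (Fintype.card (Fin n → A) : ℝ)) * ∑ s : Fin n → A, (n : ℝ) * HkF (k n) s
    with hEdef
  have hcardfun : ∀ n : ℕ, (Fintype.card (Fin n → A) : ℝ) = a ^ n := by
    intro n
    rw [Fintype.card_fun, Fintype.card_fin]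
    push_cast
    rfl
  have hgoal_eq : (fun n : ℕ => (1 / (Fintype.card (Fin n → A) : ℝ)) *
      ∑ s : Fin n → A, lam n * (n : ℝ) * HkF (k n) s) = fun n => lam n * E n := by
    funext n
    simp only [hEdef]
    rw [show (∑ s : Fin n → A, lam n * (n : ℝ) * HkF (k n) s)
        = lam n * ∑ s : Fin n → A, (n : ℝ) * HkF (k n) s by
      rw [Finset.mul_sum]
      exact Finset.sum_congr rfl fun s _ => by ring]
    ring
  rw [hgoal_eq]
  have hE0 : ∀ n, 0 ≤ E n := fun n =>
    mul_nonneg (by positivity)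
      (Finset.sum_nonneg fun s _ => mul_nonneg (Nat.cast_nonneg n) (HkF_nonneg _ s))
  have hEb : ∀ n : ℕ, 1 ≤ n → E n ≤ C * (n : ℝ) ^ ((1:ℝ) - ε) := by
    intro n hn
    have hn0 : (0:ℝ) < (n : ℝ) := by exact_mod_cast hn
    have hpow : (n : ℝ) ^ ((1:ℝ) + ε) ≤ a ^ (k n) := by
      calc (n : ℝ) ^ ((1:ℝ) + ε) = (a ^ Real.logb a (n : ℝ)) ^ ((1:ℝ) + ε) := by
            rw [Real.rpow_logb ha0 (ne_of_gt hA1) hn0]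
        _ = a ^ (Real.logb a (n : ℝ) * ((1:ℝ) + ε)) := (Real.rpow_mul (le_of_lt ha0) _ _).symm
        _ ≤ a ^ ((k n : ℕ) : ℝ) :=
            Real.rpow_le_rpow_of_exponent_le (le_of_lt hA1) (by rw [mul_comm]; exact hk n)
        _ = a ^ (k n) := Real.rpow_natCast a (k n)
    have h1 : ∑ s : Fin n → A, (n : ℝ) * HkF (k n) s
        ≤ C * (((n : ℝ) * n) * (a ^ n / a ^ (k n))) := by
      calc ∑ s : Fin n → A, (n : ℝ) * HkF (k n) s
          ≤ ∑ s : Fin n → A, C * ((Qset (k n) s).card : ℝ) :=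
            Finset.sum_le_sum fun s _ => nHkF_le s
        _ = C * ∑ s : Fin n → A, ((Qset (k n) s).card : ℝ) := (Finset.mul_sum _ _ _).symm
        _ ≤ C * (((n : ℝ) * n) * (a ^ n / a ^ (k n))) :=
            mul_le_mul_of_nonneg_left (sumQ hA) hC0
    have hEle : E n ≤ C * ((n : ℝ) * n / a ^ (k n)) := by
      simp only [hEdef]
      rw [hcardfun n]
      calc (1 / a ^ n) * ∑ s : Fin n → A, (n : ℝ) * HkF (k n) s
          ≤ (1 / a ^ n) * (C * (((n : ℝ) * n) * (a ^ n / a ^ (k n)))) :=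
            mul_le_mul_of_nonneg_left h1 (by positivity)
        _ = C * ((n : ℝ) * n / a ^ (k n)) := by
            field_simp
    refine le_trans hEle ?_
    apply mul_le_mul_of_nonneg_left _ hC0
    have h2 : (n : ℝ) * n / a ^ (k n) ≤ (n : ℝ) * n / (n : ℝ) ^ ((1:ℝ) + ε) :=
      div_le_div_of_nonneg_left (by positivity) (Real.rpow_pos_of_pos hn0 _) hpow
    refine le_trans h2 (le_of_eq ?_)
    rw [show (n : ℝ) * n = (n : ℝ) ^ ((2:ℝ)) by
        rw [show ((2:ℝ)) = ((2:ℕ) : ℝ) by norm_num, Real.rpow_natCast]; ring]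
    rw [← Real.rpow_sub hn0, show (2:ℝ) - (1 + ε) = 1 - ε by ring]
  have hEO : E =O[Filter.atTop] fun n : ℕ => (n : ℝ) ^ ((1:ℝ) - ε) := by
    rw [Asymptotics.isBigO_iff]
    refine ⟨C, ?_⟩
    filter_upwards [Filter.eventually_ge_atTop 1] with n hn
    have hn0 : (0:ℝ) < (n : ℝ) := by exact_mod_cast hn
    rw [Real.norm_eq_abs, Real.norm_eq_abs, abs_of_nonneg (hE0 n),
      abs_of_nonneg (le_of_lt (Real.rpow_pos_of_pos hn0 _))]
    exact hEb n hn
  refine (hlam.mul_isBigO hEO).trans_isBigO ?_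
  rw [Asymptotics.isBigO_iff]
  refine ⟨1, ?_⟩
  filter_upwards [Filter.eventually_ge_atTop 1] with n hn
  have hn0 : (0:ℝ) < (n : ℝ) := by exact_mod_cast hn
  have heq : (n : ℝ) ^ ε * (n : ℝ) ^ ((1:ℝ) - ε) = (n : ℝ) := by
    rw [← Real.rpow_add hn0]
    norm_num
  have hlb : (1:ℝ) ≤ Real.logb 2 a := by
    rw [show (1:ℝ) = Real.logb 2 2 from (Real.logb_self_eq_one one_lt_two).symm]
    exact Real.logb_le_logb_of_le one_lt_two (by norm_num) (by rw [ha]; exact_mod_cast hσ2)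
  rw [heq, Real.norm_eq_abs, Real.norm_eq_abs, abs_of_nonneg (le_of_lt hn0), one_mul,
    abs_of_nonneg (mul_nonneg (le_of_lt hn0) (by linarith))]
  calc (n : ℝ) = (n : ℝ) * 1 := (mul_one _).symm
    _ ≤ (n : ℝ) * Real.logb 2 a := mul_le_mul_of_nonneg_left hlb (le_of_lt hn0)

end
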